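/- (Key lemma (7.23) for Proposition 3) Let ε ∈ {−1, +1} and let T, D be positive integers. If ξ_{−εT} < ξ_{εD}, then ℓ(εD) − ℓ(−εT) = ℓ(ε(T + D)). -/

import Mathlib

/-- `ℓ(k) = ⌊k · (log 3)/(log 2)⌋`. -/
noncomputable def ell (k : ℤ) : ℤ := ⌊(k : ℝ) * (Real.log 3 / Real.log 2)⌋

/-- `ξ_k = 3^k / 2^{ℓ(k)}`, as a rational number (integer exponents). -/
noncomputable def xi (k : ℤ) : ℚ := 3 ^ k / 2 ^ ell k

lemma xi_pos (k : ℤ) : 0 < xi k := by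
  unfold xi
  positivity

lemma log_xi (k : ℤ) :
    Real.log ((xi k : ℚ) : ℝ) =
      Real.log 2 * Int.fract ((k : ℝ) * (Real.log 3 / Real.log 2)) := by
  have h2 : (0:ℝ) < Real.log 2 := Real.log_pos (by norm_num)
  have h2' : Real.log 2 ≠ 0 := ne_of_gt h2
  have hcast : ((xi k : ℚ) : ℝ) = (3:ℝ) ^ k / (2:ℝ) ^ ell k := by
    unfold xi
    push_cast
    ring
  rw [hcast, Real.log_div (by positivity) (by positivity),
    Real.log_zpow, Real.log_zpow, Int.fract]
  show _ = Real.log 2 * ((k : ℝ) * (Real.log 3 / Real.log 2) - (ell k : ℝ))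
  field_simp

lemma ell_sub (m n : ℤ)
    (h : Int.fract ((n : ℝ) * (Real.log 3 / Real.log 2)) <
         Int.fract ((m : ℝ) * (Real.log 3 / Real.log 2))) :
    ell (m - n) = ell m - ell n := by
  set α : ℝ := Real.log 3 / Real.log 2 with hα
  have e1 : Int.fract ((m : ℝ) * α) + (ell m : ℝ) = (m : ℝ) * α :=
    Int.fract_add_floor _
  have e2 : Int.fract ((n : ℝ) * α) + (ell n : ℝ) = (n : ℝ) * α :=
    Int.fract_add_floor _
  have hlt1 : Int.fract ((m : ℝ) * α) < 1 := Int.fract_lt_one _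
  have hge2 : 0 ≤ Int.fract ((n : ℝ) * α) := Int.fract_nonneg _
  show ⌊((m - n : ℤ) : ℝ) * α⌋ = ell m - ell n
  rw [Int.floor_eq_iff]
  push_cast
  have hexp : ((m : ℝ) - (n : ℝ)) * α = (m : ℝ) * α - (n : ℝ) * α := by ring
  rw [hexp]
  constructor <;> linarith

theorem ell_add_of_xi_lt (ε : ℤ) (hε : ε = 1 ∨ ε = -1) (T D : ℕ)
    (hT : 0 < T) (hD : 0 < D)
    (h : xi (-(ε * (T : ℤ))) < xi (ε * (D : ℤ))) :
    ell (ε * (D : ℤ)) - ell (-(ε * (T : ℤ))) = ell (ε * ((T : ℤ) + (D : ℤ))) := by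
  set a : ℤ := ε * (D : ℤ) with ha
  set b : ℤ := -(ε * (T : ℤ)) with hb
  have h2 : (0:ℝ) < Real.log 2 := Real.log_pos (by norm_num)
  have hlog : Real.log ((xi b : ℚ) : ℝ) < Real.log ((xi a : ℚ) : ℝ) :=
    Real.log_lt_log (by exact_mod_cast xi_pos b) (by exact_mod_cast h)
  rw [log_xi, log_xi] at hlog
  have hfr := lt_of_mul_lt_mul_left hlog h2.le
  have hab : ε * ((T : ℤ) + (D : ℤ)) = a - b := by rw [ha, hb]; ring
  rw [hab, ell_sub a b hfr]
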